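/- Let m ≥ 1 and (γ,w) be an (n,mn)-parking function such that every factor of γ of the form N E^p N satisfies p ≤ m. Then the reading word of (γ,w) equals the reverse of w, i.e., read(γ,w) = w^{-1} = w_n w_{n-1} ... w_1. -/

import Mathlib

open scoped Classical

inductive Step : Type
  | N | E | D
deriving DecidableEq, Repr

instance : Fintype Step :=
  ⟨{Step.N, Step.E, Step.D}, by intro x; cases x <;> simp⟩

open Step

/-- number of occurrences of the letter `s` in the word `w` -/
def cnt (s : Step) (w : List Step) : ℕ := w.count s

/-- Schröder (or Dyck, if no `D`s) path in an `n × n` grid: every prefix has at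
least as many `N`s as `E`s, and the totals agree. -/
def IsSchroeder (w : List Step) : Prop :=
  (∀ p : List Step, p <+: w → cnt E p ≤ cnt N p) ∧ cnt N w = cnt E w

/-- words that are concatenations of blocks `NE` and `D` -/
inductive IsNED : List Step → Prop
  | nil : IsNED []
  | ne {w} : IsNED w → IsNED (N :: E :: w)
  | d {w} : IsNED w → IsNED (D :: w)

/-- area of a Schröder path: the number of lower triangles between the path and the
main diagonal, computed as the sum over `N` and `D` steps of the height
`#N - #E` of the starting point of the step above the diagonal. -/
def areaAux : ℕ → List Step → ℕ
  | _, [] => 0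
  | h, N :: w => h + areaAux (h+1) w
  | h, D :: w => h + areaAux h w
  | h, E :: w => areaAux (h-1) w

def area (w : List Step) : ℕ := areaAux 0 w

/-- area of an `N/E` lattice path in a rectangular grid: the number of boxes under
the path, i.e. the sum over `E` steps of the number of `N` steps before it. -/
def areaNEAux : ℕ → List Step → ℕ
  | _, [] => 0
  | h, N :: w => areaNEAux (h+1) w
  | h, E :: w => h + areaNEAux h w
  | h, D :: w => areaNEAux h w

def areaNE (w : List Step) : ℕ := areaNEAux 0 w

/-- number of `N`s occurring before the `(j+1)`-st `E` (`j` is 0-indexed);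
this is the height of the path above the horizontal interval `[j, j+1]`. -/
def nBefore : List Step → ℕ → ℕ
  | [], _ => 0
  | N :: w, j => 1 + nBefore w j
  | E :: w, j => if j = 0 then 0 else nBefore w (j-1)
  | D :: w, j => nBefore w j

/-- number of `E`s occurring before the `(i+1)`-st `N` (`i` is 0-indexed). -/
def eBefore : List Step → ℕ → ℕ
  | [], _ => 0
  | E :: w, i => 1 + eBefore w i
  | N :: w, i => if i = 0 then 0 else eBefore w (i-1)
  | D :: w, i => eBefore w i

/-- number of `D`s occurring after the `e`-th `E` (`e` is 1-indexed). -/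
def dAfterE : List Step → ℕ → ℕ
  | [], _ => 0
  | E :: w, e => if e ≤ 1 then cnt D w else dAfterE w (e-1)
  | D :: w, e => dAfterE w e
  | N :: w, e => dAfterE w e

/-- Combined computation of `bounce(Γ(γ)) + numph(γ)` along the bounce path of
`Γ(γ)`.  Here `g` is the Schröder path, `w = Γ(g)` is the underlying Dyck path,
`nn` its size; the bounce path has corners (peaks) at the positions
`j₀ = 0, jₖ₊₁ = nBefore w jₖ`; each intermediate return `jₖ₊₁ < nn` contributes
`nn - jₖ₊₁` to the bounce of `Γ(g)`, and the peak with corner at `jₖ` is the start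
of the `(jₖ+1)`-st east step, contributing to numph the number of diagonal steps of
`g` above it, i.e. after that east step. -/
def bounceAux (g w : List Step) (nn : ℕ) : ℕ → ℕ → ℕ
  | 0, _ => 0
  | fuel+1, j =>
      dAfterE g (j+1) +
        (if nn ≤ nBefore w j ∨ nBefore w j ≤ j then 0
         else (nn - nBefore w j) + bounceAux g w nn fuel (nBefore w j))

/-- the bounce statistic of a Schröder path: `bounce(Γ(γ)) + numph(γ)` -/
def bounce (g : List Step) : ℕ :=
  let w := g.filter (fun s => s ≠ D)
  let nn := cnt E w
  if nn = 0 then 0 else bounceAux g w nn g.length 0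

/-- the (signed) area coordinate `a_i = m·i - (#E before the (i+1)-st N)` of line `i`
(0-indexed) for a path in an `n × mn` grid. -/
def aLine (m : ℕ) (g : List Step) (i : ℕ) : ℤ := (m : ℤ) * i - eBefore g i

/-- an `(n, mn)`-Dyck path: `n` north steps, `mn` east steps, no diagonal steps,
staying weakly above the main diagonal. -/
def IsParkingPath (n m : ℕ) (g : List Step) : Prop :=
  (∀ s ∈ g, s ≠ D) ∧ cnt N g = n ∧ cnt E g = m * n ∧
    ∀ p : List Step, p <+: g → cnt E p ≤ m * cnt N p

/-- an `(n, mn)`-parking function: an `(n,mn)`-Dyck path labelled by a permutation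
`w` of `{0, …, n-1}` whose labels increase within each column. -/
def IsParking (n m : ℕ) (g : List Step) (w : Fin n → Fin n) : Prop :=
  IsParkingPath n m g ∧ Function.Bijective w ∧
    ∀ i j : Fin n, (j : ℕ) = (i : ℕ) + 1 → eBefore g (i : ℕ) = eBefore g (j : ℕ) → w i < w j

/-- the diagonal inversion statistic of an `(n, mn)`-parking function -/
def dinv (n m : ℕ) (g : List Step) (w : Fin n → Fin n) : ℤ :=
  ∑ i : Fin n, ∑ j : Fin n,
    if (i : ℕ) < (j : ℕ) then
      (if w i < w j then max 0 ((m : ℤ) - |aLine m g (i : ℕ) - aLine m g (j : ℕ)|) else 0) +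
        (if w j < w i then max 0 ((m : ℤ) - |aLine m g (j : ℕ) - aLine m g (i : ℕ) + 1|) else 0)
    else 0

/-- the number of descents of the word `w` -/
def desNum (n : ℕ) (w : Fin n → Fin n) : ℕ :=
  ((Finset.range (n-1)).filter fun i =>
    ∃ hj : i + 1 < n, w ⟨i+1, hj⟩ < w ⟨i, Nat.lt_of_succ_lt hj⟩).card

/-- the major index of the word `w` (with positions 1-indexed as usual) -/
def majStat (n : ℕ) (w : Fin n → Fin n) : ℕ :=
  ∑ i ∈ (Finset.range (n-1)).filter (fun i =>
    ∃ hj : i + 1 < n, w ⟨i+1, hj⟩ < w ⟨i, Nat.lt_of_succ_lt hj⟩), (i+1)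

/-- the reading word of a labelled path in an `n × mn` grid: labels are read along
diagonals parallel to the main diagonal, starting with the farthest diagonal,
each diagonal being read from top-right to bottom-left. -/
def readWord (n m : ℕ) (g : List Step) (lab : ℕ → ℕ) : List ℕ :=
  ((List.range (m * n + 1)).map fun k =>
    (((List.range n).reverse.filter fun i => aLine m g i = (m * n : ℤ) - k).map lab)).flatten

/-- the labelling function `ℕ → ℕ` associated to a permutation of `Fin n` -/
def labOf {n : ℕ} (w : Fin n → Fin n) : ℕ → ℕ :=
  fun i => if h : i < n then (w ⟨i, h⟩ : ℕ) else 0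

/-- one step of the algorithm `φ`, on the reversed word: find the rightmost
(i.e. first in the reversed word) east step not followed by an east step,
and swap it with the letter following it. -/
def phiRevAux : List Step → List Step
  | a :: E :: t => if a ≠ E then E :: a :: t else a :: phiRevAux (E :: t)
  | a :: t => a :: phiRevAux t
  | [] => []

/-- one step of the algorithm `φ` -/
def phiStep (w : List Step) : List Step := (phiRevAux w.reverse).reverse

/-- the sequence `φ(γ) = (γ₀, γ₁, …, γ_{bounce γ})` produced by the algorithm -/
def phiSeq (g : List Step) : List (List Step) :=
  (List.range (bounce g + 1)).map fun i => phiStep^[i] g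

/-- the union of all sequences `φ(γ)` over area-0 Schröder paths with `n` blocks -/
def phiUniv (n : ℕ) : Set (List Step) :=
  {p | ∃ g, IsNED g ∧ cnt N g + cnt D g = n ∧ p ∈ phiSeq g}

/-- the map replacing each block `NE` by `N` and each `D` by `E` -/
def theta : List Step → List Step
  | N :: E :: w => N :: theta w
  | D :: w => E :: theta w
  | _ :: w => theta w
  | [] => []

/-- the cells of the hook-shaped Young diagram `(d, 1^{n-d})` (row 0 is the arm). -/
def hookCells (n d : ℕ) : Finset (ℕ × ℕ) :=
  ((Finset.range d).image fun c => ((0 : ℕ), c)) ∪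
    ((Finset.range (n - d + 1)).image fun r => (r, (0 : ℕ)))

/-- a standard Young tableau of hook shape `(d, 1^{n-d})`: `pos i` is the cell
`(row, column)` containing the entry `i+1`; entries increase along rows and columns. -/
structure HookSYT (n d : ℕ) where
  pos : Fin n → ℕ × ℕ
  mem : ∀ i, pos i ∈ hookCells n d
  inj : Function.Injective pos
  rowInc : ∀ i j : Fin n, (pos i).1 = (pos j).1 → (pos i).2 < (pos j).2 → i < j
  colInc : ∀ i j : Fin n, (pos i).2 = (pos j).2 → (pos i).1 < (pos j).1 → i < j

/-- the descent set of a standard Young tableau: entries `i ∈ {1, …, n-1}` such that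
the entry `i+1` lies in a strictly higher row than `i`. -/
def Des {n d : ℕ} (τ : HookSYT n d) : Finset ℕ :=
  (Finset.Icc 1 (n-1)).filter fun i =>
    ∃ hi : i < n, ∃ hi' : i - 1 < n, (τ.pos ⟨i - 1, hi'⟩).1 < (τ.pos ⟨i, hi⟩).1

/-- the major index of a standard Young tableau -/
def majT {n d : ℕ} (τ : HookSYT n d) : ℕ := ∑ i ∈ Des τ, i

/-- the number of descents of a standard Young tableau -/
def desT {n d : ℕ} (τ : HookSYT n d) : ℕ := (Des τ).card

/-- the maximum of the descent set -/
def maxDes {n d : ℕ} (τ : HookSYT n d) : ℕ := (Des τ).sup id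

/-- the map `M_{n,d}`: the path `γ₁γ₂⋯γₙ` with `γₙ = NE`, `γ_{n-i} = NE` if
`i ∈ Des τ` and `γ_{n-i} = D` otherwise -/
def Mmap (n d : ℕ) (τ : HookSYT n d) : List Step :=
  (((List.range n).map fun j =>
    if j = n - 1 then [N, E]
    else if (n - 1 - j) ∈ Des τ then [N, E] else [D])).flatten

/-- the map `S_{n,d}`: the path `γ₁⋯γ_{n-1}` with `γ_{n-i} = NNEE` if
`i = max Des τ` and `1 ∈ Des τ`, `γ_{n-i} = NDE` if `i = max Des τ` and
`1 ∉ Des τ`, `γ_{n-i} = NE` if `i = 1` or `i ∈ Des τ ∖ {max Des τ}`, and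
`γ_{n-i} = D` otherwise. -/
def Smap (n d : ℕ) (τ : HookSYT n d) : List Step :=
  (((List.range (n-1)).map fun j =>
    if (n - 1 - j) = maxDes τ then (if 1 ∈ Des τ then [N,N,E,E] else [N,D,E])
    else if (n - 1 - j) = 1 ∨ (n - 1 - j) ∈ Des τ then [N,E] else [D])).flatten

/-- the set `V_{n,d}` of Schröder paths of the form `Dʲ NNEE u` or `Dʲ NDE u`
with `u ∈ {NE,D}* NE`, having `n-d+1` north steps and `d-1` diagonal steps. -/
def Vset (n d : ℕ) : Set (List Step) :=
  {g | (∃ j u, IsNED u ∧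
      (g = List.replicate j D ++ [N,N,E,E] ++ (u ++ [N,E]) ∨
       g = List.replicate j D ++ [N,D,E] ++ (u ++ [N,E]))) ∧
     cnt N g = n - d + 1 ∧ cnt D g = d - 1}

/-- Schröder paths in an `n × n` grid with `dd` diagonal steps, area `a`,
ending with `NE` -/
def SchT (n dd a : ℕ) : Set (List Step) :=
  {g | IsSchroeder g ∧ cnt D g = dd ∧ cnt N g = n - dd ∧ area g = a ∧ ∃ u, g = u ++ [N, E]}

/-- the 'upper' forms: `Dʲ NNEE γ' NE NE` or `γ' NE Dʲ NNEE γ''` -/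
def UpperForm (g : List Step) : Prop :=
  (∃ j u, IsNED u ∧ g = List.replicate j D ++ [N,N,E,E] ++ u ++ [N,E,N,E]) ∨
  (∃ u j v, IsNED u ∧ g = u ++ [N,E] ++ List.replicate j D ++ [N,N,E,E] ++ v)

/-- the 'lower' forms: `Dʲ NNEE γ' D NE` or `γ' NDE Dʲ NE γ''` -/
def LowerForm (g : List Step) : Prop :=
  (∃ j u, IsNED u ∧ g = List.replicate j D ++ [N,N,E,E] ++ u ++ [D,N,E]) ∨
  (∃ u j v, IsNED u ∧ g = u ++ [N,D,E] ++ List.replicate j D ++ [N,E] ++ v)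

/-- the number of distinct columns of the path -/
def Tcols (n : ℕ) (g : List Step) : ℕ :=
  ((Finset.range n).image fun i => eBefore g i).card

/-- the `q`-integer `[k]_q = 1 + q + ⋯ + q^{k-1}` as a polynomial -/
noncomputable def qInt (k : ℕ) : Polynomial ℤ := ∑ i ∈ Finset.range k, Polynomial.X ^ i

/-- the `q`-factorial `[k]!_q` -/
noncomputable def qFact (k : ℕ) : Polynomial ℤ := ∏ i ∈ Finset.range k, qInt (i+1)

section Aux

lemma eBefore_mono (g : List Step) : ∀ i j : ℕ, i ≤ j → eBefore g i ≤ eBefore g j := by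
  induction g with
  | nil => intro i j _; simp [eBefore]
  | cons a t ih =>
    intro i j hij
    cases a with
    | E => simpa [eBefore] using ih i j hij
    | D => simpa [eBefore] using ih i j hij
    | N =>
      cases i with
      | zero => simp [eBefore]
      | succ i' =>
        cases j with
        | zero => omega
        | succ j' =>
          simpa [eBefore] using ih i' j' (by omega)

lemma exists_firstN : ∀ (t : List Step), (∀ s ∈ t, s ≠ D) → 1 ≤ cnt N t →
    ∃ p v, t = List.replicate p E ++ N :: v ∧ eBefore t 0 = p := by
  intro t
  induction t with
  | nil => simp [cnt]
  | cons a t ih =>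
    intro hD hN
    cases a with
    | D => exact absurd rfl (hD D (by simp))
    | N => exact ⟨0, t, by simp, by simp [eBefore]⟩
    | E =>
      obtain ⟨p, v, h1, h2⟩ := ih (fun s hs => hD s (by simp [hs]))
        (by simpa [cnt, List.count_cons] using hN)
      exact ⟨p+1, v, by simp [h1, List.replicate_succ], by simp [eBefore, h2]; omega⟩

lemma eBefore_step (m : ℕ) : ∀ (g : List Step), (∀ s ∈ g, s ≠ D) →
    (∀ (p : ℕ) (u v : List Step), g = u ++ N :: (List.replicate p E ++ N :: v) → p ≤ m) →
    ∀ i, i + 1 < cnt N g → eBefore g (i+1) ≤ eBefore g i + m := by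
  intro g
  induction g with
  | nil => simp [cnt]
  | cons a t ih =>
    intro hD hfac i hi
    cases a with
    | D => exact absurd rfl (hD D (by simp))
    | E =>
      have := ih (fun s hs => hD s (by simp [hs]))
        (fun p u v h => hfac p (E::u) v (by simp [h])) i
        (by simpa [cnt, List.count_cons] using hi)
      simp only [eBefore]; omega
    | N =>
      cases i with
      | zero =>
        have hN : 1 ≤ cnt N t := by
          have : cnt N (N :: t) = cnt N t + 1 := List.count_cons_self
          omega
        obtain ⟨p, v, h1, h2⟩ := exists_firstN t (fun s hs => hD s (by simp [hs])) hN
        have hp : p ≤ m := hfac p [] v (by simp [h1])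
        simp [eBefore, h2]; omega
      | succ j =>
        have := ih (fun s hs => hD s (by simp [hs]))
          (fun p u v h => hfac p (N::u) v (by simp [h])) j
          (by simp [cnt, List.count_cons] at hi ⊢; omega)
        simpa [eBefore] using this

lemma exists_prefix (g : List Step) :
    ∀ i : ℕ, ∃ u, u <+: g ∧ cnt E u = eBefore g i ∧ cnt N u ≤ i := by
  induction g with
  | nil => intro i; exact ⟨[], by simp, by simp [cnt, eBefore], by simp [cnt]⟩
  | cons a t ih =>
    intro i
    cases a with
    | E =>
      obtain ⟨u, h1, h2, h3⟩ := ih i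
      exact ⟨E::u, List.cons_prefix_cons.mpr ⟨rfl, h1⟩,
        by simp [cnt, List.count_cons, eBefore] at h2 ⊢; omega,
        by simpa [cnt, List.count_cons] using h3⟩
    | D =>
      obtain ⟨u, h1, h2, h3⟩ := ih i
      exact ⟨D::u, List.cons_prefix_cons.mpr ⟨rfl, h1⟩,
        by simpa [cnt, List.count_cons, eBefore] using h2,
        by simpa [cnt, List.count_cons] using h3⟩
    | N =>
      cases i with
      | zero => exact ⟨[], by simp, by simp [cnt, eBefore], by simp [cnt]⟩
      | succ j =>
        obtain ⟨u, h1, h2, h3⟩ := ih j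
        exact ⟨N::u, List.cons_prefix_cons.mpr ⟨rfl, h1⟩,
          by simpa [cnt, List.count_cons, eBefore] using h2,
          by simp [cnt, List.count_cons] at h3 ⊢; omega⟩

lemma flatten_filter_key {α : Type} (key : α → ℕ) :
    ∀ (l : List α), l.Pairwise (fun a b => key a ≤ key b) →
    ∀ K, (∀ a ∈ l, key a < K) →
    ((List.range K).map fun k => l.filter (fun a => decide (key a = k))).flatten = l := by
  intro l
  induction l with
  | nil => intro _ K _; simp
  | cons a t ih =>
    intro hs K hK
    obtain ⟨ha, ht⟩ := List.pairwise_cons.mp hs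
    have hKa : key a < K := hK a (by simp)
    have hsplit : K = (key a + 1) + (K - (key a + 1)) := by omega
    have key_step : ∀ (l' : List α), (∀ b ∈ l', key a ≤ key b) →
        ((List.range K).map fun k => l'.filter (fun x => decide (key x = k))).flatten
          = l'.filter (fun x => decide (key x = key a)) ++
            ((List.range (K - (key a + 1))).map
              fun j => l'.filter (fun x => decide (key x = key a + 1 + j))).flatten := by
      intro l' hl'
      conv_lhs => rw [hsplit, List.range_add, List.map_append, List.flatten_append,
        List.range_succ, List.map_append, List.flatten_append]
      have h1 : ((List.range (key a)).map
          fun k => l'.filter (fun x => decide (key x = k))).flatten = [] := by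
        rw [List.flatten_eq_nil_iff]
        intro u hu
        rw [List.mem_map] at hu
        obtain ⟨k, hk, rfl⟩ := hu
        rw [List.mem_range] at hk
        rw [List.filter_eq_nil_iff]
        intro x hx
        have := hl' x hx
        simp only [decide_eq_true_eq]
        omega
      rw [h1, List.map_map]
      simp only [List.nil_append, List.map_cons, List.map_nil, List.flatten_cons,
        List.flatten_nil, List.append_nil]
      rfl
    have h2 := key_step (a :: t) (by intro b hb; rcases List.mem_cons.mp hb with rfl | hb; · rfl
                                     · exact ha b hb)
    have h3 := key_step t ha
    rw [h2]
    have hfa : (a :: t).filter (fun x => decide (key x = key a))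
        = a :: t.filter (fun x => decide (key x = key a)) := by
      simp [List.filter_cons]
    have hfb : ∀ j, (a :: t).filter (fun x => decide (key x = key a + 1 + j))
        = t.filter (fun x => decide (key x = key a + 1 + j)) := by
      intro j
      rw [List.filter_cons]
      simp only [decide_eq_true_eq]
      rw [if_neg (by omega)]
    have : ((List.range (K - (key a + 1))).map
        fun j => (a :: t).filter (fun x => decide (key x = key a + 1 + j))).flatten
        = ((List.range (K - (key a + 1))).map
        fun j => t.filter (fun x => decide (key x = key a + 1 + j))).flatten := by
      congr 1
      exact List.map_congr_left (fun j _ => hfb j)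
    rw [this, hfa]
    have h4 := ih ht K (fun b hb => hK b (by simp [hb]))
    rw [h3] at h4
    rw [List.cons_append, h4]

lemma main_aux {α β : Type} (lab : α → β) (key : α → ℕ) (p : ℕ → α → Bool) (l : List α)
    (hs : l.Pairwise (fun a b => key a ≤ key b)) (K : ℕ) (hK : ∀ a ∈ l, key a < K)
    (hp : ∀ k, k < K → ∀ a ∈ l, (p k a = true ↔ key a = k)) :
    ((List.range K).map fun k => (l.filter (p k)).map lab).flatten = l.map lab := by
  have h1 : ∀ k ∈ List.range K, l.filter (p k) = l.filter (fun a => decide (key a = k)) := by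
    intro k hk
    apply List.filter_congr
    intro a ha
    rw [List.mem_range] at hk
    have := hp k hk a ha
    rw [Bool.eq_iff_iff, this, decide_eq_true_eq]
  have h2 : (List.range K).map (fun k => (l.filter (p k)).map lab)
      = (List.range K).map (fun k => (l.filter (fun a => decide (key a = k))).map lab) :=
    List.map_congr_left (fun k hk => by rw [h1 k hk])
  rw [h2]
  have h3 : (List.range K).map (fun k => (l.filter (fun a => decide (key a = k))).map lab)
      = ((List.range K).map (fun k => l.filter (fun a => decide (key a = k)))).map
          (List.map lab) := by
    rw [List.map_map]; rfl
  rw [h3, ← List.map_flatten, flatten_filter_key key l hs K hK]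

end Aux

/-- If every factor `N E^p N` of the Dyck path of an `(n,mn)`-parking
function satisfies `p ≤ m`, then the reading word equals the reverse of `w`:
`read(γ,w) = w_n w_{n-1} ⋯ w_1`. -/
theorem stmt9 (n m : ℕ) (hm : 1 ≤ m) (g : List Step) (w : Fin n → Fin n)
    (hpark : IsParking n m g w)
    (hfac : ∀ (p : ℕ) (u v : List Step),
      g = u ++ Step.N :: (List.replicate p Step.E ++ Step.N :: v) → p ≤ m) :
    readWord n m g (labOf w) = (List.range n).reverse.map (labOf w) := by
  obtain ⟨⟨hD, hN, hE, hpre⟩, -, -⟩ := hpark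
  have hEb : ∀ i : ℕ, eBefore g i ≤ m * i := by
    intro i
    obtain ⟨u, hu, h2, h3⟩ := exists_prefix g i
    calc eBefore g i = cnt E u := h2.symm
      _ ≤ m * cnt N u := hpre u hu
      _ ≤ m * i := Nat.mul_le_mul_left m h3
  have hEb' : ∀ i : ℕ, (eBefore g i : ℤ) ≤ (m : ℤ) * i := by
    intro i
    exact_mod_cast hEb i
  have h0 : ∀ i : ℕ, 0 ≤ aLine m g i := by
    intro i
    simp only [aLine]
    linarith [hEb' i]
  have hup : ∀ i : ℕ, i < n → aLine m g i ≤ (m : ℤ) * n := by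
    intro i hi
    simp only [aLine]
    have h1 : (0:ℤ) ≤ (eBefore g i : ℤ) := Int.natCast_nonneg _
    have h2 : (m:ℤ) * i ≤ (m:ℤ) * n :=
      mul_le_mul_of_nonneg_left (by exact_mod_cast hi.le) (by positivity)
    linarith
  have hstep : ∀ i : ℕ, i + 1 < n → aLine m g i ≤ aLine m g (i+1) := by
    intro i hi
    have h1 := eBefore_step m g hD hfac i (by rw [hN]; exact hi)
    have h1' : (eBefore g (i+1) : ℤ) ≤ (eBefore g i : ℤ) + m := by exact_mod_cast h1
    simp only [aLine]
    have h2 : (m:ℤ) * (↑i + 1) = (m:ℤ) * i + m := by ring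
    push_cast
    linarith
  have hmono : ∀ i j : ℕ, i ≤ j → j < n → aLine m g i ≤ aLine m g j := by
    intro i j hij
    induction j, hij using Nat.le_induction with
    | base => intro _; exact le_refl _
    | succ j hij ih =>
      intro hj
      exact (ih (by omega)).trans (hstep j hj)
  set key : ℕ → ℕ := fun i => ((m:ℤ) * n - aLine m g i).toNat with hkey
  have hsorted : ((List.range n).reverse).Pairwise (fun a b => key a ≤ key b) := by
    rw [List.pairwise_reverse]
    refine (@List.pairwise_lt_range n).imp_of_mem ?_
    intro a b ha hb hab
    rw [List.mem_range] at ha hb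
    have := hmono a b hab.le hb
    exact Int.toNat_le_toNat (by linarith)
  have hbound : ∀ a ∈ (List.range n).reverse, key a < m * n + 1 := by
    intro a ha
    rw [List.mem_reverse, List.mem_range] at ha
    have h1 : ((m:ℤ) * n - aLine m g a).toNat ≤ m * n := by
      rw [Int.toNat_le]
      have := h0 a
      push_cast
      linarith
    exact Nat.lt_succ_of_le h1
  have hp : ∀ k, k < m * n + 1 → ∀ a ∈ (List.range n).reverse,
      ((decide (aLine m g a = (m * n : ℤ) - k) : Bool) = true ↔ key a = k) := by
    intro k hk a ha
    rw [List.mem_reverse, List.mem_range] at ha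
    rw [decide_eq_true_eq]
    have hka : key a = ((m:ℤ) * n - aLine m g a).toNat := rfl
    have hnn : 0 ≤ (m:ℤ) * n - aLine m g a := by linarith [hup a ha]
    constructor
    · intro h
      rw [hka]
      have h2 : (m:ℤ) * n - aLine m g a = (k : ℤ) := by rw [h]; ring
      rw [h2, Int.toNat_natCast]
    · intro h
      have h2 : (((m:ℤ) * n - aLine m g a).toNat : ℤ) = (m:ℤ) * n - aLine m g a :=
        Int.toNat_of_nonneg hnn
      rw [← hka, h] at h2
      linarith
  unfold readWord
  have hdo : (do let a ← List.range (m*n+1); pure ((a:ℕ) : ℤ))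
      = (List.range (m*n+1)).map (fun a : ℕ => (a:ℤ)) := by
    rw [List.map_eq_flatMap]
    simp only [List.pure_def, List.bind_eq_flatMap]
  rw [hdo, List.map_map]
  exact main_aux (labOf w) key
    (fun k a => decide (aLine m g a = (m * n : ℤ) - k)) ((List.range n).reverse)
    hsorted (m * n + 1) hbound hp
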